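/- Under the proxy-gradient iteration x_{k+1} = x_k − η C u_k where ∇J(x_k) = M_k^T u_k, each M_k satisfies u_k^T M_k u_k ≥ α‖u_k‖², J is L-smooth and bounded below by J*, and 0 < η < 2α/(L C), the sum of squared proxy gradients is bounded: ∑_{k=0}^{K−1} ‖u_k‖² ≤ (J(x_0) − J*) / (ηC(α − LηC/2)) for every K. Consequently, ‖u_k‖ → 0 as k → ∞. -/

import Mathlib

open RealInnerProductSpace

private lemma descent_lemma {d : ℕ} (L : ℝ) (hL : 0 < L)
    (J : EuclideanSpace ℝ (Fin d) → ℝ) (hJ : Differentiable ℝ J)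
    (hLip : ∀ a b : EuclideanSpace ℝ (Fin d), ‖gradient J a - gradient J b‖ ≤ L * ‖a - b‖)
    (a b : EuclideanSpace ℝ (Fin d)) :
    J b ≤ J a + ⟪gradient J a, b - a⟫ + L / 2 * ‖b - a‖ ^ 2 := by
  set v := b - a with hv
  have hline : ∀ t : ℝ, HasDerivAt (fun s : ℝ => a + s • v) v t := by
    intro t
    simpa using ((hasDerivAt_id t).smul_const v).const_add a
  have hg : ∀ t : ℝ, HasDerivAt (fun s : ℝ => J (a + s • v))
      (⟪gradient J (a + t • v), v⟫) t := by
    intro t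
    have hF : HasFDerivAt J ((InnerProductSpace.toDual ℝ _) (gradient J (a + t • v)))
        (a + t • v) :=
      ((hJ (a + t • v)).hasGradientAt).hasFDerivAt
    have := hF.comp_hasDerivAt t (hline t)
    simp only [InnerProductSpace.toDual_apply_apply] at this
    exact this
  have hgradcont : Continuous fun t : ℝ => gradient J (a + t • v) := by
    have hlip : LipschitzWith (Real.toNNReal L) (gradient J) := by
      apply LipschitzWith.of_dist_le_mul
      intro p q
      simpa [dist_eq_norm, Real.coe_toNNReal _ hL.le] using hLip p q
    exact hlip.continuous.comp (by continuity)
  have hcont : Continuous fun t : ℝ => ⟪gradient J (a + t • v), v⟫ :=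
    hgradcont.inner continuous_const
  have hint : ∫ t in (0:ℝ)..1, ⟪gradient J (a + t • v), v⟫ = J b - J a := by
    have := intervalIntegral.integral_eq_sub_of_hasDerivAt
      (f := fun s : ℝ => J (a + s • v))
      (fun t _ => hg t) (hcont.intervalIntegrable 0 1)
    simpa [hv] using this
  have hbd : ∀ t ∈ Set.Icc (0:ℝ) 1,
      ⟪gradient J (a + t • v), v⟫ ≤ ⟪gradient J a, v⟫ + L * t * ‖v‖ ^ 2 := by
    intro t ht
    have h1 : ⟪gradient J (a + t • v) - gradient J a, v⟫ ≤
        ‖gradient J (a + t • v) - gradient J a‖ * ‖v‖ := real_inner_le_norm _ _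
    have h2 : ‖gradient J (a + t • v) - gradient J a‖ ≤ L * (t * ‖v‖) := by
      have := hLip (a + t • v) a
      simpa [norm_smul, abs_of_nonneg ht.1] using this
    have h3 : ⟪gradient J (a + t • v) - gradient J a, v⟫ ≤ L * t * ‖v‖ ^ 2 := by
      calc ⟪gradient J (a + t • v) - gradient J a, v⟫ ≤
          ‖gradient J (a + t • v) - gradient J a‖ * ‖v‖ := h1
        _ ≤ L * (t * ‖v‖) * ‖v‖ :=
            mul_le_mul_of_nonneg_right h2 (norm_nonneg _)
        _ = L * t * ‖v‖ ^ 2 := by ring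
    have := inner_sub_left (𝕜 := ℝ) (gradient J (a + t • v)) (gradient J a) v
    linarith [h3, this.symm.le, this.le]
  have hmono : ∫ t in (0:ℝ)..1, ⟪gradient J (a + t • v), v⟫ ≤
      ∫ t in (0:ℝ)..1, (⟪gradient J a, v⟫ + L * t * ‖v‖ ^ 2) := by
    apply intervalIntegral.integral_mono_on (by norm_num)
      (hcont.intervalIntegrable 0 1)
      ((continuous_const.add ((continuous_const.mul continuous_id).mul
        continuous_const)).intervalIntegrable 0 1)
    intro t ht
    exact hbd t ht
  have hval : ∫ t in (0:ℝ)..1, (⟪gradient J a, v⟫ + L * t * ‖v‖ ^ 2) =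
      ⟪gradient J a, v⟫ + L / 2 * ‖v‖ ^ 2 := by
    have h1 : (fun t : ℝ => ⟪gradient J a, v⟫ + L * t * ‖v‖ ^ 2) =
        fun t : ℝ => ⟪gradient J a, v⟫ + (L * ‖v‖ ^ 2) * t := by
      funext t; ring
    rw [intervalIntegral.integral_congr (g := fun t : ℝ =>
        ⟪gradient J a, v⟫ + (L * ‖v‖ ^ 2) * t) (fun t _ => by dsimp; ring),
      intervalIntegral.integral_add intervalIntegrable_const
        (intervalIntegral.intervalIntegrable_id.const_mul _),
      intervalIntegral.integral_const_mul, integral_id]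
    simp
    ring
  linarith [hint, hmono, hval.le, hval.ge]

/-- Convergence of the proxy-gradient iteration `x_{k+1} = x_k − η C u_k` where
`∇J(x_k) = M_kᵀ u_k`, each `M_k` satisfies `u_kᵀ M_k u_k ≥ α ‖u_k‖²`, `J` is `L`-smooth and
bounded below by `J*`, and `0 < η < 2α/(L C)`: the squared proxy gradients are summable with
`∑_{k<K} ‖u_k‖² ≤ (J(x_0) − J*) / (η C (α − L η C / 2))`, hence `‖u_k‖ → 0`. -/
theorem proxy_gradient_convergence {d : ℕ} (L α η C Jstar : ℝ)
    (hL : 0 < L) (hα : 0 < α) (hC : 0 < C) (hη : 0 < η) (hη' : η < 2 * α / (L * C))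
    (J : EuclideanSpace ℝ (Fin d) → ℝ) (hJ : Differentiable ℝ J)
    (hLip : ∀ a b : EuclideanSpace ℝ (Fin d), ‖gradient J a - gradient J b‖ ≤ L * ‖a - b‖)
    (hbound : ∀ z, Jstar ≤ J z)
    (x u : ℕ → EuclideanSpace ℝ (Fin d))
    (M : ℕ → EuclideanSpace ℝ (Fin d) →L[ℝ] EuclideanSpace ℝ (Fin d))
    (hiter : ∀ k, x (k + 1) = x k - (η * C) • u k)
    (hgrad : ∀ k, gradient J (x k) = ContinuousLinearMap.adjoint (M k) (u k))
    (halign : ∀ k, α * ‖u k‖ ^ 2 ≤ ⟪u k, M k (u k)⟫) :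
    (∀ K : ℕ, ∑ k ∈ Finset.range K, ‖u k‖ ^ 2 ≤
        (J (x 0) - Jstar) / (η * C * (α - L * η * C / 2))) ∧
      Filter.Tendsto (fun k => ‖u k‖) Filter.atTop (nhds 0) := by
  set c : ℝ := η * C * (α - L * η * C / 2) with hc
  have hc0 : 0 < c := by
    have h1 : η * (L * C) < 2 * α := (lt_div_iff₀ (by positivity)).mp hη'
    have : 0 < α - L * η * C / 2 := by nlinarith
    positivity
  -- per-step decrease
  have hstep : ∀ k, c * ‖u k‖ ^ 2 ≤ J (x k) - J (x (k + 1)) := by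
    intro k
    have hd := descent_lemma L hL J hJ hLip (x k) (x (k + 1))
    have hdiff : x (k + 1) - x k = -((η * C) • u k) := by
      rw [hiter k]; abel
    have hin : ⟪gradient J (x k), x (k + 1) - x k⟫ = -(η * C) * ⟪u k, M k (u k)⟫ := by
      rw [hdiff, hgrad k, inner_neg_right, real_inner_smul_right,
        ContinuousLinearMap.adjoint_inner_left]
      ring
    have hnorm : ‖x (k + 1) - x k‖ ^ 2 = (η * C) ^ 2 * ‖u k‖ ^ 2 := by
      rw [hdiff, norm_neg, norm_smul]
      rw [mul_pow, Real.norm_eq_abs, sq_abs]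
    have halk := halign k
    have hηC : 0 < η * C := by positivity
    rw [hin, hnorm] at hd
    have : -(η * C) * ⟪u k, M k (u k)⟫ ≤ -(η * C) * (α * ‖u k‖ ^ 2) := by
      apply mul_le_mul_of_nonpos_left halk (by linarith)
    nlinarith [hd, this]
  -- partial sum bound
  have hsum : ∀ K : ℕ, ∑ k ∈ Finset.range K, ‖u k‖ ^ 2 ≤ (J (x 0) - Jstar) / c := by
    intro K
    have htel : ∑ k ∈ Finset.range K, (J (x k) - J (x (k + 1))) = J (x 0) - J (x K) := by
      rw [Finset.sum_range_sub' (fun k => J (x k))]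
    have h1 : c * ∑ k ∈ Finset.range K, ‖u k‖ ^ 2 ≤ J (x 0) - Jstar := by
      rw [Finset.mul_sum]
      calc ∑ k ∈ Finset.range K, c * ‖u k‖ ^ 2
          ≤ ∑ k ∈ Finset.range K, (J (x k) - J (x (k + 1))) :=
            Finset.sum_le_sum fun k _ => hstep k
        _ = J (x 0) - J (x K) := htel
        _ ≤ J (x 0) - Jstar := by linarith [hbound (x K)]
    rw [le_div_iff₀ hc0]
    linarith [h1]
  refine ⟨hsum, ?_⟩
  have hsummable : Summable (fun k => ‖u k‖ ^ 2) :=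
    summable_of_sum_range_le (fun k => by positivity) hsum
  have h0 : Filter.Tendsto (fun k => ‖u k‖ ^ 2) Filter.atTop (nhds 0) :=
    hsummable.tendsto_atTop_zero
  have : Filter.Tendsto (fun k => Real.sqrt (‖u k‖ ^ 2)) Filter.atTop (nhds 0) := by
    have := (Real.continuous_sqrt.tendsto 0).comp h0
    simpa [Function.comp_def] using this
  have heq : (fun k => Real.sqrt (‖u k‖ ^ 2)) = fun k => ‖u k‖ :=
    funext fun k => Real.sqrt_sq (norm_nonneg _)
  rwa [heq] at this
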